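/- Let $k$ be a field of characteristic different from $2$ and let $V$ be a finite-dimensional $k$-vector space. Let $u_1,v_1,w_1$ and $u_2,v_2,w_2$ be linear forms on $V$ such that $w_1(x)^{2} - u_1(x)v_1(x) = w_2(x)^{2} - u_2(x)v_2(x)$ for all $x \in V$, and suppose this common quadratic form $S$ is not the square of a linear form. Then the linear span of $\{u_1,v_1,w_1\}$ in the dual space of $V$ equals the linear span of $\{u_2,v_2,w_2\}$. -/

import Mathlib

set_option linter.unusedSectionVars false

section Aux

variable {k V : Type*} [Field k] [AddCommGroup V] [Module k V] [FiniteDimensional k V]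

/-- If a family of functionals admits no nontrivial linear relation, the product map is
surjective. -/
lemma aux_pi_surjective {n : ℕ} (f : Fin n → (V →ₗ[k] k))
    (hf : ∀ c : Fin n → k, (∑ i, c i • f i) = 0 → ∀ i, c i = 0) :
    Function.Surjective (LinearMap.pi f) := by
  rw [← LinearMap.range_eq_top]
  by_contra hn
  obtain ⟨φ, φ0, hφ⟩ := Submodule.exists_dual_map_eq_bot_of_lt_top
    (p := LinearMap.range (LinearMap.pi f)) (lt_top_iff_ne_top.2 hn) inferInstance
  have key : ∀ x : V, φ (LinearMap.pi f x) = 0 := by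
    intro x
    have : φ (LinearMap.pi f x) ∈ (LinearMap.range (LinearMap.pi f)).map φ :=
      ⟨LinearMap.pi f x, LinearMap.mem_range_self _ x, rfl⟩
    rw [hφ] at this
    simpa using this
  have hc : (∑ i, φ (fun j => if i = j then (1:k) else 0) • f i) = 0 := by
    ext x
    have h := key x
    rw [LinearMap.pi_apply_eq_sum_univ φ (LinearMap.pi f x)] at h
    simpa [LinearMap.pi_apply, smul_eq_mul, mul_comm] using h
  have hzero := hf _ hc
  apply φ0
  refine LinearMap.ext fun x => ?_
  rw [LinearMap.pi_apply_eq_sum_univ φ x]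
  simp [hzero]

lemma aux_exists_two (f g : V →ₗ[k] k)
    (h : ∀ a b : k, a • f + b • g = 0 → a = 0 ∧ b = 0) (s t : k) :
    ∃ x, f x = s ∧ g x = t := by
  have hs := aux_pi_surjective ![f, g] (by
    intro c hc
    have := h (c 0) (c 1) (by simpa [Fin.sum_univ_two] using hc)
    intro i; fin_cases i <;> simp [this.1, this.2])
  obtain ⟨x, hx⟩ := hs ![s, t]
  exact ⟨x, by simpa using congrFun hx 0, by simpa using congrFun hx 1⟩

lemma aux_exists_three (f g h : V →ₗ[k] k)
    (hind : ∀ a b c : k, a • f + b • g + c • h = 0 → a = 0 ∧ b = 0 ∧ c = 0) (s t r : k) :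
    ∃ x, f x = s ∧ g x = t ∧ h x = r := by
  have hs := aux_pi_surjective ![f, g, h] (by
    intro c hc
    have := hind (c 0) (c 1) (c 2) (by simpa [Fin.sum_univ_three] using hc)
    intro i; fin_cases i <;> simp [this.1, this.2.1, this.2.2])
  obtain ⟨x, hx⟩ := hs ![s, t, r]
  exact ⟨x, by simpa using congrFun hx 0, by simpa using congrFun hx 1,
    by simpa using congrFun hx 2⟩

/-- The (doubled) polar map of the quadratic form `w² - uv`. -/
noncomputable def polarMap (u v w : V →ₗ[k] k) : V →ₗ[k] (V →ₗ[k] k) :=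
  ((2:k) • w).smulRight w - v.smulRight u - u.smulRight v

lemma polarMap_apply (u v w : V →ₗ[k] k) (a x : V) :
    polarMap u v w a x = 2 * w a * w x - v a * u x - u a * v x := by
  simp [polarMap, LinearMap.smulRight_apply, mul_assoc]

lemma polarMap_range_le (u v w : V →ₗ[k] k) :
    LinearMap.range (polarMap u v w) ≤ Submodule.span k {u, v, w} := by
  rintro _ ⟨a, rfl⟩
  have hu : u ∈ Submodule.span k {u, v, w} := Submodule.subset_span (by simp)
  have hv : v ∈ Submodule.span k {u, v, w} := Submodule.subset_span (by simp)
  have hw : w ∈ Submodule.span k {u, v, w} := Submodule.subset_span (by simp)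
  have : polarMap u v w a = ((2:k) * w a) • w - (v a) • u - (u a) • v := by
    ext x; simp [polarMap_apply, LinearMap.smul_apply, smul_eq_mul]
  rw [this]
  exact Submodule.sub_mem _ (Submodule.sub_mem _ (Submodule.smul_mem _ _ hw)
    (Submodule.smul_mem _ _ hu)) (Submodule.smul_mem _ _ hv)

/-- Key lemma: if `w² - uv` is not a square of a linear form, then `u, v, w` all lie in the
range of the polar map. -/
lemma span_le_polarMap_range (h2 : (2:k) ≠ 0) (u v w : V →ₗ[k] k)
    (hS : ¬ ∃ z : V →ₗ[k] k, ∀ x, w x ^ 2 - u x * v x = z x ^ 2) :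
    Submodule.span k {u, v, w} ≤ LinearMap.range (polarMap u v w) := by
  have hu : u ≠ 0 := by
    rintro rfl
    exact hS ⟨w, fun x => by simp⟩
  have hv : v ≠ 0 := by
    rintro rfl
    exact hS ⟨w, fun x => by simp⟩
  -- membership goal reduction
  rw [Submodule.span_le]
  by_cases hvu : ∃ c : k, v = c • u
  · obtain ⟨c, rfl⟩ := hvu
    have hc : c ≠ 0 := by rintro rfl; simp at hv
    by_cases hwu : ∃ d : k, w = d • u
    · obtain ⟨d, rfl⟩ := hwu
      have hdc : d ^ 2 - c ≠ 0 := by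
        intro h
        exact hS ⟨0, fun x => by
          simp only [LinearMap.smul_apply, smul_eq_mul, LinearMap.zero_apply]
          linear_combination (u x) ^ 2 * h⟩
      obtain ⟨a, ha⟩ : ∃ a, u a ≠ 0 := by
        by_contra hcon
        push_neg at hcon
        exact hu (by ext x; simp [hcon x])
      have humem : u ∈ LinearMap.range (polarMap u (c • u) (d • u)) := by
        refine ⟨(2 * (d ^ 2 - c) * u a)⁻¹ • a, ?_⟩
        ext x
        have h0 : 2 * (d ^ 2 - c) * u a ≠ 0 := by
          exact mul_ne_zero (mul_ne_zero h2 hdc) ha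
        simp only [polarMap_apply, LinearMap.smul_apply, smul_eq_mul, map_smul]
        field_simp
        ring
      rintro s hs
      simp only [Set.mem_insert_iff, Set.mem_singleton_iff] at hs
      rcases hs with rfl | rfl | rfl
      · exact humem
      · exact Submodule.smul_mem _ c humem
      · exact Submodule.smul_mem _ d humem
    · -- u and w are independent
      have hind : ∀ a b : k, a • u + b • w = 0 → a = 0 ∧ b = 0 := by
        intro a b hab
        rcases eq_or_ne b 0 with rfl | hb
        · have : a • u = 0 := by simpa using hab
          rcases smul_eq_zero.1 this with h | h
          · exact ⟨h, rfl⟩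
          · exact absurd h hu
        · exact absurd ⟨-a / b, by
            have : w = (-a / b) • u := by
              rw [eq_comm, ← sub_eq_zero]
              have : (-a/b) • u - w = (-b⁻¹) • (a • u + b • w) := by
                rw [smul_add, smul_smul, smul_smul]
                field_simp
                module
              rw [this, hab, smul_zero]
            exact this⟩ hwu
      have humem : u ∈ LinearMap.range (polarMap u (c • u) w) := by
        obtain ⟨a, ha1, ha2⟩ := aux_exists_two u w hind (-(2 * c)⁻¹) 0
        refine ⟨a, ?_⟩
        ext x
        simp only [polarMap_apply, LinearMap.smul_apply, smul_eq_mul, ha1, ha2]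
        field_simp
        ring
      have hwmem : w ∈ LinearMap.range (polarMap u (c • u) w) := by
        obtain ⟨a, ha1, ha2⟩ := aux_exists_two u w hind 0 (2⁻¹)
        refine ⟨a, ?_⟩
        ext x
        simp only [polarMap_apply, LinearMap.smul_apply, smul_eq_mul, ha1, ha2]
        field_simp
        ring
      rintro s hs
      simp only [Set.mem_insert_iff, Set.mem_singleton_iff] at hs
      rcases hs with rfl | rfl | rfl
      · exact humem
      · exact Submodule.smul_mem _ c humem
      · exact hwmem
  · -- u and v are independent
    have hind : ∀ a b : k, a • u + b • v = 0 → a = 0 ∧ b = 0 := by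
      intro a b hab
      rcases eq_or_ne b 0 with rfl | hb
      · have : a • u = 0 := by simpa using hab
        rcases smul_eq_zero.1 this with h | h
        · exact ⟨h, rfl⟩
        · exact absurd h hu
      · exact absurd ⟨-a / b, by
          rw [eq_comm, ← sub_eq_zero]
          have : (-a/b) • u - v = (-b⁻¹) • (a • u + b • v) := by
            rw [smul_add, smul_smul, smul_smul]
            field_simp
            module
          rw [this, hab, smul_zero]⟩ hvu
    by_cases hw : ∃ α β : k, w = α • u + β • v
    · obtain ⟨α, β, rfl⟩ := hw
      have hD : 4 * (α * β) - 1 ≠ 0 := by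
        intro h
        exact hS ⟨α • u - β • v, fun x => by
          simp only [LinearMap.add_apply, LinearMap.sub_apply, LinearMap.smul_apply, smul_eq_mul]
          linear_combination u x * v x * h⟩
      set D := 4 * (α * β) - 1 with hDdef
      have humem : u ∈ LinearMap.range (polarMap u v (α • u + β • v)) := by
        obtain ⟨a, ha1, ha2⟩ := aux_exists_two u v hind (2 * β ^ 2 / D) ((1 - 2 * (α * β)) / D)
        refine ⟨a, ?_⟩
        ext x
        simp only [polarMap_apply, LinearMap.add_apply, LinearMap.smul_apply, smul_eq_mul,
          ha1, ha2]
        field_simp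
        ring
      have hvmem : v ∈ LinearMap.range (polarMap u v (α • u + β • v)) := by
        obtain ⟨a, ha1, ha2⟩ := aux_exists_two u v hind ((1 - 2 * (α * β)) / D) (2 * α ^ 2 / D)
        refine ⟨a, ?_⟩
        ext x
        simp only [polarMap_apply, LinearMap.add_apply, LinearMap.smul_apply, smul_eq_mul,
          ha1, ha2]
        field_simp
        ring
      rintro s hs
      simp only [Set.mem_insert_iff, Set.mem_singleton_iff] at hs
      rcases hs with rfl | rfl | rfl
      · exact humem
      · exact hvmem
      · exact Submodule.add_mem _ (Submodule.smul_mem _ α humem) (Submodule.smul_mem _ β hvmem)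
    · -- u, v, w independent
      have hind3 : ∀ a b c : k, a • u + b • v + c • w = 0 → a = 0 ∧ b = 0 ∧ c = 0 := by
        intro a b c habc
        rcases eq_or_ne c 0 with rfl | hc
        · have := hind a b (by simpa using habc)
          exact ⟨this.1, this.2, rfl⟩
        · exact absurd ⟨-a / c, -b / c, by
            rw [eq_comm, ← sub_eq_zero]
            have : (-a/c) • u + (-b/c) • v - w = (-c⁻¹) • (a • u + b • v + c • w) := by
              rw [smul_add, smul_add, smul_smul, smul_smul, smul_smul]
              field_simp
              module
            rw [this, habc, smul_zero]⟩ hw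
      have humem : u ∈ LinearMap.range (polarMap u v w) := by
        obtain ⟨a, ha1, ha2, ha3⟩ := aux_exists_three u v w hind3 0 (-1) 0
        exact ⟨a, by ext x; simp [polarMap_apply, ha1, ha2, ha3]⟩
      have hvmem : v ∈ LinearMap.range (polarMap u v w) := by
        obtain ⟨a, ha1, ha2, ha3⟩ := aux_exists_three u v w hind3 (-1) 0 0
        exact ⟨a, by ext x; simp [polarMap_apply, ha1, ha2, ha3]⟩
      have hwmem : w ∈ LinearMap.range (polarMap u v w) := by
        obtain ⟨a, ha1, ha2, ha3⟩ := aux_exists_three u v w hind3 0 0 (2⁻¹)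
        refine ⟨a, ?_⟩
        ext x
        simp only [polarMap_apply, ha1, ha2, ha3]
        field_simp
        ring
      rintro s hs
      simp only [Set.mem_insert_iff, Set.mem_singleton_iff] at hs
      rcases hs with rfl | rfl | rfl
      · exact humem
      · exact hvmem
      · exact hwmem

end Aux

/-- If `w₁² - u₁v₁ = w₂² - u₂v₂` as quadratic forms and this common quadratic
form is not the square of a linear form, then `span{u₁,v₁,w₁} = span{u₂,v₂,w₂}`
in the dual space. -/
theorem span_eq_span_of_same_quadratic_form {k V : Type*} [Field k] [AddCommGroup V]
    [Module k V] [FiniteDimensional k V] (h2 : (2 : k) ≠ 0)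
    (u₁ v₁ w₁ u₂ v₂ w₂ : V →ₗ[k] k)
    (heq : ∀ x : V, w₁ x ^ 2 - u₁ x * v₁ x = w₂ x ^ 2 - u₂ x * v₂ x)
    (hS : ¬ ∃ z : V →ₗ[k] k, ∀ x, w₁ x ^ 2 - u₁ x * v₁ x = z x ^ 2) :
    Submodule.span k {u₁, v₁, w₁} = Submodule.span k {u₂, v₂, w₂} := by
  have hS₂ : ¬ ∃ z : V →ₗ[k] k, ∀ x, w₂ x ^ 2 - u₂ x * v₂ x = z x ^ 2 := by
    rintro ⟨z, hz⟩
    exact hS ⟨z, fun x => (heq x).trans (hz x)⟩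
  have hT : polarMap u₁ v₁ w₁ = polarMap u₂ v₂ w₂ := by
    ext a x
    have h1 := heq (a + x)
    simp only [map_add] at h1
    rw [polarMap_apply, polarMap_apply]
    linear_combination h1 - heq a - heq x
  have key₁ := span_le_polarMap_range h2 u₁ v₁ w₁ hS
  have key₂ := span_le_polarMap_range h2 u₂ v₂ w₂ hS₂
  have r₁ := polarMap_range_le u₁ v₁ w₁
  have r₂ := polarMap_range_le u₂ v₂ w₂
  apply le_antisymm
  · calc Submodule.span k {u₁, v₁, w₁} ≤ LinearMap.range (polarMap u₁ v₁ w₁) := key₁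
      _ = LinearMap.range (polarMap u₂ v₂ w₂) := by rw [hT]
      _ ≤ Submodule.span k {u₂, v₂, w₂} := r₂
  · calc Submodule.span k {u₂, v₂, w₂} ≤ LinearMap.range (polarMap u₂ v₂ w₂) := key₂
      _ = LinearMap.range (polarMap u₁ v₁ w₁) := by rw [hT]
      _ ≤ Submodule.span k {u₁, v₁, w₁} := r₁
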